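/- In the mediated prisoner's dilemma with payoffs B < b < g < G (mutual cooperation gives g, mutual defection gives b, unilateral defection gives G to the defector and B to the cooperator), where the order of moves is uniformly random and the second mover is told to defect if and only if the first mover defected, full cooperation is a Nash equilibrium if and only if G - g ≤ g - b. -/
import Mathlib


/-- Payoff of the row player in the prisoner's dilemma; `true` = cooperate (C). -/
def pdU (B b g G : ℝ) : Bool → Bool → ℝ
  | true, true => g
  | true, false => B
  | false, true => G
  | false, false => b

/-- A strategy maps the recommendation received (`true` = "play C") to an action.
The mediator recommends C to the first mover; the second mover is recommended C
iff the first mover actually played C.  The order is uniformly random, so player 1's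
expected payoff averages the two orders. -/
noncomputable def medEU1 (B b g G : ℝ) (s1 s2 : Bool → Bool) : ℝ :=
  (pdU B b g G (s1 true) (s2 (s1 true)) + pdU B b g G (s1 (s2 true)) (s2 true)) / 2

noncomputable def medEU2 (B b g G : ℝ) (s1 s2 : Bool → Bool) : ℝ :=
  (pdU B b g G (s2 (s1 true)) (s1 true) + pdU B b g G (s2 true) (s1 (s2 true))) / 2

/-- Full cooperation (both players obey the mediator, i.e. strategy `id`) is a Nash
equilibrium of the mediated prisoner's dilemma iff `G - g ≤ g - b`. -/
theorem stmt0 (B b g G : ℝ) (h1 : B < b) (h2 : b < g) (h3 : g < G) :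
    ((∀ s1' : Bool → Bool, medEU1 B b g G s1' id ≤ medEU1 B b g G id id) ∧
     (∀ s2' : Bool → Bool, medEU2 B b g G id s2' ≤ medEU2 B b g G id id)) ↔
    G - g ≤ g - b := by
  constructor
  · rintro ⟨h, -⟩
    have := h (fun _ => false)
    simp [medEU1, pdU] at this
    linarith
  · rintro h
    constructor
    · intro s
      simp only [medEU1, pdU, id]
      rcases Bool.dichotomy (s true) with ht | ht <;>
        rcases Bool.dichotomy (s false) with hf | hf <;>
          simp [ht, hf, pdU] <;> linarith
    · intro s
      simp only [medEU2, pdU, id]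
      rcases Bool.dichotomy (s true) with ht | ht <;>
        rcases Bool.dichotomy (s false) with hf | hf <;>
          simp [ht, hf, pdU] <;> linarith
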